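/- arXiv:2301.11740 — 2 statements merged into one kernel-verified Lean document; each statement's English description precedes it below -/
import Mathlib

section
/- Let 𝔸 = (A, ≤, →, Σ) be an implicative algebra with |A| < κ for a strongly inaccessible cardinal κ, and let W, ∈_W, =_W and the interpretation ‖·‖ be as defined below. For every formula in context φ[x̄, y, z] with x̄ of length n, writing ∃z∈y φ for ∃z(z ∈ y ∧ φ): ‖∃z∈y φ [x̄, y]‖ ≡_{Σ[W^{n+1}]} the function (ᾱ, β) ↦ ∃⃗_{u∈dom(β)} (β(u) × ‖φ[x̄, y, z]‖(ᾱ, β, u)). -/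
universe u

/-- An implicative algebra `𝔸 = (A, ≤, →, Σ)`:  a complete lattice `(A, ≤)` together with an
implication `imp` which is antitone in its first argument, monotone in its second argument and
turns infima in the second argument into infima, and a separator `Sig ⊆ A` which is upward
closed, closed under modus ponens and contains the combinators `K` and `S`. -/
structure ImplicativeAlgebra (A : Type u) [CompleteLattice A] where
  imp : A → A → A
  imp_antitone : ∀ ⦃a a' b : A⦄, a ≤ a' → imp a' b ≤ imp a b
  imp_monotone : ∀ ⦃a b b' : A⦄, b ≤ b' → imp a b ≤ imp a b'
  imp_sInf : ∀ (a : A) (S : Set A), imp a (sInf S) = ⨅ b ∈ S, imp a b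
  Sig : Set A
  Sig_upward : ∀ ⦃a b : A⦄, a ∈ Sig → a ≤ b → b ∈ Sig
  Sig_mp : ∀ ⦃a b : A⦄, imp a b ∈ Sig → a ∈ Sig → b ∈ Sig
  Sig_K : (⨅ a : A, ⨅ b : A, imp a (imp b a)) ∈ Sig
  Sig_S : (⨅ a : A, ⨅ b : A, ⨅ c : A,
      imp (imp a (imp b c)) (imp (imp a b) (imp a c))) ∈ Sig

namespace ImplicativeAlgebra

variable {A : Type u} [CompleteLattice A]

/-- `a × b := ⨅ x, ((a → (b → x)) → x)`. -/
def times (IA : ImplicativeAlgebra A) (a b : A) : A :=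
  ⨅ x : A, IA.imp (IA.imp a (IA.imp b x)) x

/-- `a + b := ⨅ x, ((a → x) → ((b → x) → x))`. -/
def plus (IA : ImplicativeAlgebra A) (a b : A) : A :=
  ⨅ x : A, IA.imp (IA.imp a x) (IA.imp (IA.imp b x) x)

/-- `∃⃗_{i} f i := ⨅ x, ((⨅ i, (f i → x)) → x)`.  (`∀⃗` is just `⨅`.) -/
def aex (IA : ImplicativeAlgebra A) {ι : Sort*} (f : ι → A) : A :=
  ⨅ x : A, IA.imp (⨅ i, IA.imp (f i) x) x

/-- `φ ⊢_{Σ[I]} ψ` iff `⨅ i, (φ i → ψ i) ∈ Σ`. -/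
def SigLe (IA : ImplicativeAlgebra A) {ι : Sort*} (f g : ι → A) : Prop :=
  (⨅ i, IA.imp (f i) (g i)) ∈ IA.Sig

/-- `φ ≡_{Σ[I]} ψ` iff `φ ⊢_{Σ[I]} ψ` and `ψ ⊢_{Σ[I]} φ`. -/
def SigEquiv (IA : ImplicativeAlgebra A) {ι : Sort*} (f g : ι → A) : Prop :=
  IA.SigLe f g ∧ IA.SigLe g f

end ImplicativeAlgebra

/-- Pre-elements of the cumulative hierarchy of partial functions valued in `A`:
an element is an `A`-labelled family of previously constructed elements, i.e. a partial
function (presented by a family indexed by its domain) from earlier elements to `A`. -/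
inductive PreW (A : Type u) : Type (u + 1)
  | mk (ι : Type u) (fam : ι → PreW A) (val : ι → A)

namespace PreW

variable {A : Type u}

/-- The (index type of the) domain of a partial function. -/
def dom : PreW A → Type u
  | ⟨ι, _, _⟩ => ι

/-- The family of elements of the domain. -/
def fam : (w : PreW A) → w.dom → PreW A
  | ⟨_, f, _⟩ => f

/-- The values in `A` of the partial function. -/
def val : (w : PreW A) → w.dom → A
  | ⟨_, _, v⟩ => v

/-- `w` is hereditarily of size `< κ`:  this carves out exactly the elements of the stage
`W_κ` of the hierarchy (for `κ` inaccessible). -/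
def HSmall (κ : Cardinal.{u}) : PreW A → Prop
  | ⟨ι, f, _⟩ => Cardinal.mk ι < κ ∧ ∀ i, HSmall κ (f i)

theorem HSmall.fam {κ : Cardinal.{u}} :
    ∀ {w : PreW A}, w.HSmall κ → ∀ i : w.dom, (w.fam i).HSmall κ
  | ⟨_, _, _⟩, h, i => h.2 i

/-- The rank of an element of the hierarchy. -/
noncomputable def rank : PreW A → Ordinal.{u}
  | ⟨_, f, _⟩ => ⨆ i, Order.succ (rank (f i))

theorem rank_lt_mk {ι : Type u} (f : ι → PreW A) (v : ι → A) (i : ι) :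
    (f i).rank < (PreW.mk ι f v).rank := by
  have h : Order.succ (f i).rank ≤ ⨆ j, Order.succ (f j).rank := Ordinal.le_iSup _ i
  have : (f i).rank < ⨆ j, Order.succ (f j).rank :=
    lt_of_lt_of_le (Order.lt_succ _) h
  simpa [rank] using this

end PreW

namespace ImplicativeAlgebra

variable {A : Type u} [CompleteLattice A]

/-- `α =_W β`, defined by recursion on rank:
`α =_W β := (α ⊆_W β) × (β ⊆_W α)` where
`α ⊆_W β := ∀⃗_{t ∈ dom α} (α t → (fam α t ∈_W β))` and
`γ ∈_W β := ∃⃗_{s ∈ dom β} (β s × (fam β s =_W γ))`. -/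
noncomputable def eqW (IA : ImplicativeAlgebra A) : PreW A → PreW A → A
  | ⟨ι₁, f₁, v₁⟩, ⟨ι₂, f₂, v₂⟩ =>
    IA.times
      (⨅ t : ι₁, IA.imp (v₁ t)
        (IA.aex fun s : ι₂ => IA.times (v₂ s) (IA.eqW (f₂ s) (f₁ t))))
      (⨅ t : ι₂, IA.imp (v₂ t)
        (IA.aex fun s : ι₁ => IA.times (v₁ s) (IA.eqW (f₁ s) (f₂ t))))
termination_by α β => max α.rank β.rank
decreasing_by
  · exact max_lt (lt_of_lt_of_le (PreW.rank_lt_mk f₂ v₂ s) (le_max_right _ _))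
      (lt_of_lt_of_le (PreW.rank_lt_mk f₁ v₁ t) (le_max_left _ _))
  · exact max_lt (lt_of_lt_of_le (PreW.rank_lt_mk f₁ v₁ s) (le_max_left _ _))
      (lt_of_lt_of_le (PreW.rank_lt_mk f₂ v₂ t) (le_max_right _ _))

/-- `α ∈_W β := ∃⃗_{s ∈ dom β} (β s × (fam β s =_W α))`. -/
noncomputable def memW (IA : ImplicativeAlgebra A) (α β : PreW A) : A :=
  IA.aex fun s : β.dom => IA.times (β.val s) (IA.eqW (β.fam s) α)

/-- `α ⊆_W β := ∀⃗_{t ∈ dom α} (α t → (fam α t ∈_W β))`. -/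
noncomputable def subW (IA : ImplicativeAlgebra A) (α β : PreW A) : A :=
  ⨅ t : α.dom, IA.imp (α.val t) (IA.memW (α.fam t) β)

end ImplicativeAlgebra

/-- The stage `W = W_κ` of the hierarchy: all hereditarily `< κ`-sized elements. -/
def WSet (A : Type u) (κ : Cardinal.{u}) : Type (u + 1) :=
  {w : PreW A // w.HSmall κ}

/-- An element of the domain of `w ∈ W`, as an element of `W`. -/
def WSet.fam {A : Type u} {κ : Cardinal.{u}} (w : WSet A κ) (i : w.1.dom) : WSet A κ :=
  ⟨w.1.fam i, w.2.fam i⟩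

/-- Formulas (in context of length `n`) of the first-order language of set theory, with
(de Bruijn-style) variables `Fin n`, binary predicates `∈` and `=`, connectives `⊥`, `∧`, `∨`,
`→` and quantifiers `∃`, `∀` (binding the last variable of the enlarged context). -/
inductive SetFormula : ℕ → Type
  | bot {n : ℕ} : SetFormula n
  | mem {n : ℕ} (i j : Fin n) : SetFormula n
  | eq {n : ℕ} (i j : Fin n) : SetFormula n
  | and {n : ℕ} (φ ψ : SetFormula n) : SetFormula n
  | or {n : ℕ} (φ ψ : SetFormula n) : SetFormula n
  | imp {n : ℕ} (φ ψ : SetFormula n) : SetFormula n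
  | ex {n : ℕ} (φ : SetFormula (n + 1)) : SetFormula n
  | all {n : ℕ} (φ : SetFormula (n + 1)) : SetFormula n

namespace SetFormula

/-- Renaming of variables (since the only terms of the language of set theory are variables,
substitution is a special case). -/
def rename : {n m : ℕ} → (Fin n → Fin m) → SetFormula n → SetFormula m
  | _, _, _, .bot => .bot
  | _, _, f, .mem i j => .mem (f i) (f j)
  | _, _, f, .eq i j => .eq (f i) (f j)
  | _, _, f, .and φ ψ => .and (φ.rename f) (ψ.rename f)
  | _, _, f, .or φ ψ => .or (φ.rename f) (ψ.rename f)
  | _, _, f, .imp φ ψ => .imp (φ.rename f) (ψ.rename f)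
  | _, _, f, .ex φ => .ex (φ.rename (Fin.snoc (Fin.castSucc ∘ f) (Fin.last _)))
  | _, _, f, .all φ => .all (φ.rename (Fin.snoc (Fin.castSucc ∘ f) (Fin.last _)))

/-- Universal closure `∀x₁ … ∀xₙ φ` of a formula in context of length `n`. -/
def allClose : {n : ℕ} → SetFormula n → SetFormula 0
  | 0, φ => φ
  | _ + 1, φ => allClose (.all φ)

end SetFormula

namespace ImplicativeAlgebra

variable {A : Type u} [CompleteLattice A]

/-- The interpretation `‖φ[x₁,…,xₙ]‖ : Wⁿ → A` of a formula in context, by recursion on the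
structure of `φ`:  atomic formulas are interpreted by `∈_W` and `=_W`, `∧` by `×`, `∨` by `+`,
`→` by `→`, `∃` by `∃⃗` over `W` and `∀` by `∀⃗` (i.e. `⨅`) over `W`. -/
noncomputable def interp (IA : ImplicativeAlgebra A) (κ : Cardinal.{u}) :
    {n : ℕ} → SetFormula n → (Fin n → WSet A κ) → A
  | _, .bot, _ => ⊥
  | _, .mem i j, v => IA.memW (v i).1 (v j).1
  | _, .eq i j, v => IA.eqW (v i).1 (v j).1
  | _, .and φ ψ, v => IA.times (IA.interp κ φ v) (IA.interp κ ψ v)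
  | _, .or φ ψ, v => IA.plus (IA.interp κ φ v) (IA.interp κ ψ v)
  | _, .imp φ ψ, v => IA.imp (IA.interp κ φ v) (IA.interp κ ψ v)
  | _, .ex φ, v => IA.aex fun β : WSet A κ => IA.interp κ φ (Fin.snoc v β)
  | _, .all φ, v => ⨅ β : WSet A κ, IA.interp κ φ (Fin.snoc v β)

end ImplicativeAlgebra

/-! ### Auxiliary machinery: application, combinators and a λ-calculus of realizers -/

namespace ImplicativeAlgebra

variable {A : Type u} [CompleteLattice A] (IA : ImplicativeAlgebra A)

lemma imp_iInf {ι : Sort*} (a : A) (f : ι → A) :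
    IA.imp a (⨅ i, f i) = ⨅ i, IA.imp a (f i) := by
  rw [iInf, IA.imp_sInf, iInf_range]

/-- Application in an implicative algebra. -/
def app (a b : A) : A := sInf {c | a ≤ IA.imp b c}

lemma le_imp_app (a b : A) : a ≤ IA.imp b (IA.app a b) := by
  rw [app, IA.imp_sInf]
  exact le_iInf₂ fun c hc => hc

lemma app_le {a b c : A} (h : a ≤ IA.imp b c) : IA.app a b ≤ c := sInf_le h

lemma app_le' {s p q x : A} (hs : s ≤ IA.imp p q) (hx : x ≤ p) : IA.app s x ≤ q :=
  IA.app_le (hs.trans (IA.imp_antitone hx))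

lemma app_mono {a a' b b' : A} (ha : a ≤ a') (hb : b ≤ b') :
    IA.app a b ≤ IA.app a' b' :=
  IA.app_le ((ha.trans (IA.le_imp_app a' b')).trans (IA.imp_antitone hb))

lemma app_Sig {a b : A} (ha : a ∈ IA.Sig) (hb : b ∈ IA.Sig) : IA.app a b ∈ IA.Sig :=
  IA.Sig_mp (IA.Sig_upward ha (IA.le_imp_app a b)) hb

/-- The `K` combinator. -/
def Kel : A := ⨅ a : A, ⨅ b : A, IA.imp a (IA.imp b a)

/-- The `S` combinator. -/
def Sel : A := ⨅ a : A, ⨅ b : A, ⨅ c : A,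
  IA.imp (IA.imp a (IA.imp b c)) (IA.imp (IA.imp a b) (IA.imp a c))

lemma Kel_le (a b : A) : IA.Kel ≤ IA.imp a (IA.imp b a) :=
  (iInf_le _ a).trans (iInf_le _ b)

lemma Sel_le (a b c : A) : IA.Sel ≤
    IA.imp (IA.imp a (IA.imp b c)) (IA.imp (IA.imp a b) (IA.imp a c)) :=
  ((iInf_le _ a).trans (iInf_le _ b)).trans (iInf_le _ c)

lemma Kel_Sig : IA.Kel ∈ IA.Sig := IA.Sig_K

lemma Sel_Sig : IA.Sel ∈ IA.Sig := IA.Sig_S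

lemma appK (x y : A) : IA.app (IA.app IA.Kel x) y ≤ x :=
  IA.app_le' (IA.app_le' (IA.Kel_le x y) le_rfl) le_rfl

lemma appS (x y z : A) :
    IA.app (IA.app (IA.app IA.Sel x) y) z ≤ IA.app (IA.app x z) (IA.app y z) := by
  have hx : x ≤ IA.imp z (IA.imp (IA.app y z) (IA.app (IA.app x z) (IA.app y z))) :=
    (IA.le_imp_app x z).trans (IA.imp_monotone (IA.le_imp_app (IA.app x z) (IA.app y z)))
  have h1 : IA.app IA.Sel x ≤
      IA.imp (IA.imp z (IA.app y z))
        (IA.imp z (IA.app (IA.app x z) (IA.app y z))) :=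
    IA.app_le' (IA.Sel_le z (IA.app y z) (IA.app (IA.app x z) (IA.app y z))) hx
  exact IA.app_le' (IA.app_le' h1 (IA.le_imp_app y z)) le_rfl

end ImplicativeAlgebra

/-- Combinatory terms over `ℕ`-indexed variables. -/
inductive CTerm : Type
  | K : CTerm
  | S : CTerm
  | var : ℕ → CTerm
  | app : CTerm → CTerm → CTerm

/-- λ-terms in de Bruijn notation over `ℕ`-indexed variables. -/
inductive LTerm : Type
  | var : ℕ → LTerm
  | app : LTerm → LTerm → LTerm
  | lam : LTerm → LTerm

/-- Extend an environment by a new 0-th value. -/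
def elift {A : Type u} (env : ℕ → A) (a : A) : ℕ → A
  | 0 => a
  | n + 1 => env n

/-- Bracket abstraction of the variable `0`. -/
def CTerm.abs : CTerm → CTerm
  | .var 0 => .app (.app .S .K) .K
  | .var (n + 1) => .app .K (.var n)
  | .K => .app .K .K
  | .S => .app .K .S
  | .app t u => .app (.app .S t.abs) u.abs

/-- Compilation of λ-terms to combinatory terms. -/
def LTerm.compile : LTerm → CTerm
  | .var n => .var n
  | .app t u => .app t.compile u.compile
  | .lam t => t.compile.abs

namespace ImplicativeAlgebra

variable {A : Type u} [CompleteLattice A] (IA : ImplicativeAlgebra A)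

/-- Interpretation of combinatory terms. -/
def interpC : CTerm → (ℕ → A) → A
  | .K, _ => IA.Kel
  | .S, _ => IA.Sel
  | .var n, env => env n
  | .app t u, env => IA.app (interpC t env) (interpC u env)

/-- Interpretation of λ-terms. -/
def interpL : LTerm → (ℕ → A) → A
  | .var n, env => env n
  | .app t u, env => IA.app (interpL t env) (interpL u env)
  | .lam t, env => ⨅ a : A, IA.imp a (interpL t (elift env a))

lemma app_interpC_abs_le (t : CTerm) (env : ℕ → A) (a : A) :
    IA.app (IA.interpC t.abs env) a ≤ IA.interpC t (elift env a) := by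
  induction t with
  | K => simpa [CTerm.abs, interpC] using IA.appK IA.Kel a
  | S => simpa [CTerm.abs, interpC] using IA.appK IA.Sel a
  | var n =>
    cases n with
    | zero =>
      simpa [CTerm.abs, interpC, elift] using
        (IA.appS IA.Kel IA.Kel a).trans (IA.appK a (IA.app IA.Kel a))
    | succ n => simpa [CTerm.abs, interpC, elift] using IA.appK (env n) a
  | app t u iht ihu =>
    simpa [CTerm.abs, interpC] using (IA.appS _ _ a).trans (IA.app_mono iht ihu)

lemma interpC_compile_le (t : LTerm) (env : ℕ → A) :
    IA.interpC t.compile env ≤ IA.interpL t env := by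
  induction t generalizing env with
  | var n => exact le_rfl
  | app t u iht ihu => exact IA.app_mono (iht env) (ihu env)
  | lam t iht =>
    refine le_iInf fun a => ?_
    exact (IA.le_imp_app _ a).trans
      (IA.imp_monotone ((IA.app_interpC_abs_le _ env a).trans (iht _)))

lemma interpC_Sig (t : CTerm) (env : ℕ → A) (henv : ∀ n, env n ∈ IA.Sig) :
    IA.interpC t env ∈ IA.Sig := by
  induction t with
  | K => exact IA.Kel_Sig
  | S => exact IA.Sel_Sig
  | var n => exact henv n
  | app t u iht ihu => exact IA.app_Sig iht ihu

lemma interpL_Sig (t : LTerm) (env : ℕ → A) (henv : ∀ n, env n ∈ IA.Sig) :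
    IA.interpL t env ∈ IA.Sig :=
  IA.Sig_upward (IA.interpC_Sig t.compile env henv) (IA.interpC_compile_le t env)

lemma lam_le {t : LTerm} {env : ℕ → A} {a b : A}
    (h : IA.interpL t (elift env a) ≤ b) :
    IA.interpL (.lam t) env ≤ IA.imp a b :=
  (iInf_le _ a).trans (IA.imp_monotone h)

lemma app_le2 {t u : LTerm} {env : ℕ → A} {p q : A}
    (ht : IA.interpL t env ≤ IA.imp p q) (hu : IA.interpL u env ≤ p) :
    IA.interpL (.app t u) env ≤ q :=
  IA.app_le' ht hu

lemma app_interpL_lam_le (t : LTerm) (env : ℕ → A) (a : A) :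
    IA.app (IA.interpL (.lam t) env) a ≤ IA.interpL t (elift env a) :=
  IA.app_le (iInf_le _ a)

/-! ### The fixed point combinator -/

/-- Turing's fixpoint pre-combinator `θ = λz f. f (z z f)`. -/
def theta : LTerm := .lam (.lam (.app (.var 0) (.app (.app (.var 1) (.var 1)) (.var 0))))

/-- Interpretation of `θ`. -/
def Th : A := IA.interpL theta fun _ => IA.Kel

/-- Fixed point: `fixA t = θ θ t`. -/
def fixA (t : A) : A := IA.app (IA.app IA.Th IA.Th) t

lemma Th_Sig : IA.Th ∈ IA.Sig :=
  IA.interpL_Sig _ _ fun _ => IA.Kel_Sig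

lemma fixA_Sig {t : A} (ht : t ∈ IA.Sig) : IA.fixA t ∈ IA.Sig :=
  IA.app_Sig (IA.app_Sig IA.Th_Sig IA.Th_Sig) ht

lemma fixA_le (t : A) : IA.fixA t ≤ IA.app t (IA.fixA t) := by
  have h2 : IA.app IA.Th IA.Th ≤
      IA.interpL (.lam (.app (.var 0) (.app (.app (.var 1) (.var 1)) (.var 0))))
        (elift (fun _ => IA.Kel) IA.Th) :=
    IA.app_interpL_lam_le _ _ _
  have h3 : IA.fixA t ≤
      IA.interpL (.app (.var 0) (.app (.app (.var 1) (.var 1)) (.var 0)))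
        (elift (elift (fun _ => IA.Kel) IA.Th) t) :=
    (IA.app_mono h2 le_rfl).trans (IA.app_interpL_lam_le _ _ _)
  exact h3

/-! ### Semantic lemmas for the encodings -/

lemma times_le (p q x : A) : IA.times p q ≤ IA.imp (IA.imp p (IA.imp q x)) x :=
  iInf_le _ x

lemma aex_le {ι : Sort*} (f : ι → A) (x : A) :
    IA.aex f ≤ IA.imp (⨅ i, IA.imp (f i) x) x :=
  iInf_le _ x

lemma eqW_eq (a b : PreW A) :
    IA.eqW a b = IA.times (IA.subW a b) (IA.subW b a) := by
  cases a with
  | mk ι₁ f₁ v₁ =>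
    cases b with
    | mk ι₂ f₂ v₂ => rw [eqW]; rfl

/-- The pairing combinator `λ x y k. k x y`. -/
def PAIRel : A := IA.interpL (.lam (.lam (.lam (.app (.app (.var 0) (.var 2)) (.var 1)))))
  fun _ => IA.Kel

lemma PAIRel_Sig : IA.PAIRel ∈ IA.Sig := IA.interpL_Sig _ _ fun _ => IA.Kel_Sig

lemma PAIRel_le (p q : A) : IA.PAIRel ≤ IA.imp p (IA.imp q (IA.times p q)) := by
  refine IA.lam_le (IA.lam_le (le_iInf fun x => IA.lam_le ?_))
  exact IA.app_le2 (IA.app_le2 (q := IA.imp q x) le_rfl le_rfl) le_rfl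

/-- The "fst" projection of a pair, as application to `K`. -/
lemma fst_le {c p q : A} (hc : c ≤ IA.times p q) : IA.app c IA.Kel ≤ p :=
  IA.app_le' (hc.trans (IA.times_le p q p)) (IA.Kel_le p q)

/-- An inline `λ x y. y` term. -/
lemma ki_le (env : ℕ → A) (p q : A) :
    IA.interpL (.lam (.lam (.var 0))) env ≤ IA.imp p (IA.imp q q) :=
  IA.lam_le (IA.lam_le le_rfl)

lemma snd_le {c p q : A} (env : ℕ → A) (hc : c ≤ IA.times p q) :
    IA.app c (IA.interpL (.lam (.lam (.var 0))) env) ≤ q :=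
  IA.app_le' (hc.trans (IA.times_le p q q)) (IA.ki_le env p q)

/-! ### Reflexivity of `=_W` -/

/-- The step term for the reflexivity realizer:
`λ r. PAIR H H` with `H = λ a k. k (PAIR a r)`. -/
def reflStepT : LTerm :=
  .lam (.app (.app (.var 1)
      (.lam (.lam (.app (.var 0) (.app (.app (.var 3) (.var 1)) (.var 2))))))
    (.lam (.lam (.app (.var 0) (.app (.app (.var 3) (.var 1)) (.var 2))))))

/-- Interpretation of the reflexivity step. -/
def reflStep : A := IA.interpL reflStepT fun _ => IA.PAIRel

lemma reflStep_le {ι : Type u} (f : ι → PreW A) (v : ι → A) {x : A}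
    (hx : x ≤ ⨅ i, IA.eqW (f i) (f i)) :
    IA.app IA.reflStep x ≤ IA.eqW (PreW.mk ι f v) (PreW.mk ι f v) := by
  refine (IA.app_interpL_lam_le _ _ _).trans ?_
  rw [IA.eqW_eq]
  have hH : IA.interpL
      (.lam (.lam (.app (.var 0) (.app (.app (.var 3) (.var 1)) (.var 2)))))
      (elift (fun _ => IA.PAIRel) x) ≤ IA.subW (PreW.mk ι f v) (PreW.mk ι f v) := by
    refine le_iInf fun t => IA.lam_le (le_iInf fun x' => IA.lam_le ?_)
    refine IA.app_le2 (p := IA.times (v t) (IA.eqW (f t) (f t)))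
      (iInf_le _ t) ?_
    exact IA.app_le2 (IA.app_le2 (IA.PAIRel_le (v t) (IA.eqW (f t) (f t))) le_rfl)
      (hx.trans (iInf_le _ t))
  exact IA.app_le2 (IA.app_le2 (IA.PAIRel_le _ _) hH) hH

/-- The reflexivity realizer. -/
def REFL : A := IA.fixA IA.reflStep

lemma REFL_Sig : IA.REFL ∈ IA.Sig :=
  IA.fixA_Sig (IA.interpL_Sig _ _ fun _ => IA.PAIRel_Sig)

lemma REFL_le : ∀ w : PreW A, IA.REFL ≤ IA.eqW w w := by
  intro w
  induction w with
  | mk ι f v ih =>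
    exact (IA.fixA_le _).trans (IA.reflStep_le f v (le_iInf ih))

/-! ### Symmetry and transitivity of `=_W` -/

/-- `λ e. PAIR (snd e) (fst e)`. -/
def symT : LTerm :=
  .lam (.app (.app (.var 1) (.app (.var 0) (.lam (.lam (.var 0)))))
    (.app (.var 0) (.lam (.lam (.var 1)))))

/-- The symmetry realizer. -/
def SYM : A := IA.interpL symT fun _ => IA.PAIRel

lemma SYM_Sig : IA.SYM ∈ IA.Sig := IA.interpL_Sig _ _ fun _ => IA.PAIRel_Sig

lemma SYM_le (a b : PreW A) : IA.SYM ≤ IA.imp (IA.eqW a b) (IA.eqW b a) := by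
  rw [IA.eqW_eq a b, IA.eqW_eq b a]
  refine IA.lam_le ?_
  refine IA.app_le2 (IA.app_le2 (IA.PAIRel_le (IA.subW b a) (IA.subW a b)) ?_) ?_
  · exact IA.app_le2 (IA.times_le _ _ (IA.subW b a)) (IA.lam_le (IA.lam_le le_rfl))
  · exact IA.app_le2 (IA.times_le _ _ (IA.subW a b)) (IA.lam_le (IA.lam_le le_rfl))

/-- Inner body of the transitivity step:
`λ q' d'. k (PAIR q' (r d' d))` with `k = var 6`, `PAIR = var 11`, `r = var 10`, `d = var 3`. -/
def transG2 : LTerm :=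
  .lam (.lam (.app (.var 6) (.app (.app (.var 11) (.var 1))
    (.app (.app (.var 10) (.var 0)) (.var 3)))))

/-- First component of the transitivity step. -/
def transC1 : LTerm :=
  .lam (.lam (.app (.app (.app (.var 3) (.lam (.lam (.var 1)))) (.var 1))
    (.lam (.app (.var 0)
      (.lam (.lam (.app (.app (.app (.var 5) (.lam (.lam (.var 1)))) (.var 1))
        (.lam (.app (.var 0) transG2)))))))))

/-- Second component of the transitivity step. -/
def transC2 : LTerm :=
  .lam (.lam (.app (.app (.app (.var 2) (.lam (.lam (.var 0)))) (.var 1))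
    (.lam (.app (.var 0)
      (.lam (.lam (.app (.app (.app (.var 6) (.lam (.lam (.var 0)))) (.var 1))
        (.lam (.app (.var 0) transG2)))))))))

/-- The step term of the transitivity realizer: `λ r e1 e2. PAIR C1 C2`. -/
def transStepT : LTerm := .lam (.lam (.lam (.app (.app (.var 3) transC1) transC2)))

/-- Interpretation of the transitivity step. -/
def transStep : A := IA.interpL transStepT fun _ => IA.PAIRel

lemma transStep_le {ι : Type u} (f : ι → PreW A) (v : ι → A) {x : A}
    (hx : x ≤ ⨅ i, ⨅ a' : PreW A, ⨅ c' : PreW A,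
      IA.imp (IA.eqW a' (f i)) (IA.imp (IA.eqW (f i) c') (IA.eqW a' c')))
    (a c : PreW A) :
    IA.app IA.transStep x ≤
      IA.imp (IA.eqW a (PreW.mk ι f v))
        (IA.imp (IA.eqW (PreW.mk ι f v) c) (IA.eqW a c)) := by
  set b : PreW A := PreW.mk ι f v with hb
  refine (IA.app_interpL_lam_le _ _ _).trans ?_
  rw [IA.eqW_eq a b, IA.eqW_eq b c, IA.eqW_eq a c]
  refine IA.lam_le (IA.lam_le ?_)
  refine IA.app_le2 (IA.app_le2 (IA.PAIRel_le (IA.subW a c) (IA.subW c a)) ?_) ?_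
  · -- C1 ≤ subW a c
    refine le_iInf fun t => IA.lam_le (le_iInf fun x' => IA.lam_le ?_)
    refine IA.app_le2
      (p := ⨅ s : ι, IA.imp (IA.times (v s) (IA.eqW (f s) (a.fam t))) x') ?_ ?_
    · refine (IA.app_le2 (q := IA.memW (a.fam t) b) ?_ le_rfl).trans (IA.aex_le _ x')
      refine IA.app_le2 (p := IA.imp (IA.subW a b) (IA.imp (IA.subW b a) (IA.subW a b))) ?_ ?_
      · exact (IA.times_le _ _ (IA.subW a b)).trans (IA.imp_monotone (iInf_le _ t))
      · exact IA.lam_le (IA.lam_le le_rfl)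
    · refine le_iInf fun s => IA.lam_le ?_
      refine IA.app_le2 (IA.times_le (v s) (IA.eqW (f s) (a.fam t)) x') ?_
      refine IA.lam_le (IA.lam_le ?_)
      refine IA.app_le2
        (p := ⨅ u : c.dom, IA.imp (IA.times (c.val u) (IA.eqW (c.fam u) (f s))) x') ?_ ?_
      · refine (IA.app_le2 (q := IA.memW (f s) c) ?_ le_rfl).trans (IA.aex_le _ x')
        refine IA.app_le2 (p := IA.imp (IA.subW b c) (IA.imp (IA.subW c b) (IA.subW b c))) ?_ ?_
        · exact (IA.times_le _ _ (IA.subW b c)).trans (IA.imp_monotone (iInf_le _ s))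
        · exact IA.lam_le (IA.lam_le le_rfl)
      · refine le_iInf fun u => IA.lam_le ?_
        refine IA.app_le2 (IA.times_le (c.val u) (IA.eqW (c.fam u) (f s)) x') ?_
        refine IA.lam_le (IA.lam_le ?_)
        refine IA.app_le2 (iInf_le _ u) ?_
        refine IA.app_le2
          (IA.app_le2 (IA.PAIRel_le (c.val u) (IA.eqW (c.fam u) (a.fam t))) le_rfl) ?_
        refine IA.app_le2 (IA.app_le2 (q := IA.imp (IA.eqW (f s) (a.fam t))
          (IA.eqW (c.fam u) (a.fam t))) ?_ le_rfl) le_rfl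
        exact hx.trans (((iInf_le _ s).trans (iInf_le _ (c.fam u))).trans
          (iInf_le _ (a.fam t)))
  · -- C2 ≤ subW c a
    refine le_iInf fun t => IA.lam_le (le_iInf fun x' => IA.lam_le ?_)
    refine IA.app_le2
      (p := ⨅ s : ι, IA.imp (IA.times (v s) (IA.eqW (f s) (c.fam t))) x') ?_ ?_
    · refine (IA.app_le2 (q := IA.memW (c.fam t) b) ?_ le_rfl).trans (IA.aex_le _ x')
      refine IA.app_le2 (p := IA.imp (IA.subW b c) (IA.imp (IA.subW c b) (IA.subW c b))) ?_ ?_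
      · exact (IA.times_le _ _ (IA.subW c b)).trans (IA.imp_monotone (iInf_le _ t))
      · exact IA.lam_le (IA.lam_le le_rfl)
    · refine le_iInf fun s => IA.lam_le ?_
      refine IA.app_le2 (IA.times_le (v s) (IA.eqW (f s) (c.fam t)) x') ?_
      refine IA.lam_le (IA.lam_le ?_)
      refine IA.app_le2
        (p := ⨅ u : a.dom, IA.imp (IA.times (a.val u) (IA.eqW (a.fam u) (f s))) x') ?_ ?_
      · refine (IA.app_le2 (q := IA.memW (f s) a) ?_ le_rfl).trans (IA.aex_le _ x')
        refine IA.app_le2 (p := IA.imp (IA.subW a b) (IA.imp (IA.subW b a) (IA.subW b a))) ?_ ?_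
        · exact (IA.times_le _ _ (IA.subW b a)).trans (IA.imp_monotone (iInf_le _ s))
        · exact IA.lam_le (IA.lam_le le_rfl)
      · refine le_iInf fun u => IA.lam_le ?_
        refine IA.app_le2 (IA.times_le (a.val u) (IA.eqW (a.fam u) (f s)) x') ?_
        refine IA.lam_le (IA.lam_le ?_)
        refine IA.app_le2 (iInf_le _ u) ?_
        refine IA.app_le2
          (IA.app_le2 (IA.PAIRel_le (a.val u) (IA.eqW (a.fam u) (c.fam t))) le_rfl) ?_
        refine IA.app_le2 (IA.app_le2 (q := IA.imp (IA.eqW (f s) (c.fam t))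
          (IA.eqW (a.fam u) (c.fam t))) ?_ le_rfl) le_rfl
        exact hx.trans (((iInf_le _ s).trans (iInf_le _ (a.fam u))).trans
          (iInf_le _ (c.fam t)))

/-- The transitivity realizer. -/
def TRANS : A := IA.fixA IA.transStep

lemma TRANS_Sig : IA.TRANS ∈ IA.Sig :=
  IA.fixA_Sig (IA.interpL_Sig _ _ fun _ => IA.PAIRel_Sig)

lemma TRANS_le : ∀ (b a c : PreW A),
    IA.TRANS ≤ IA.imp (IA.eqW a b) (IA.imp (IA.eqW b c) (IA.eqW a c)) := by
  intro b
  induction b with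
  | mk ι f v ih =>
    intro a c
    refine (IA.fixA_le _).trans (IA.transStep_le f v ?_ a c)
    exact le_iInf fun i => le_iInf fun a' => le_iInf fun c' => ih i a' c'

/-! ### Compatibility of `∈_W` with `=_W` -/

/-- `λ e m k. m (λ c'. c' (λ p q. k (PAIR p (TRANS q (SYM e)))))`. -/
def memLT : LTerm :=
  .lam (.lam (.lam (.app (.var 1) (.lam (.app (.var 0) (.lam (.lam
    (.app (.var 3) (.app (.app (.var 6) (.var 1))
      (.app (.app (.var 7) (.var 0)) (.app (.var 8) (.var 5))))))))))))

/-- Environment for `memLT`/`memRT`. -/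
noncomputable def memEnv : ℕ → A
  | 0 => IA.PAIRel
  | 1 => IA.TRANS
  | 2 => IA.SYM
  | _ + 3 => IA.Kel

/-- Realizer of left compatibility of membership. -/
noncomputable def MEML : A := IA.interpL memLT IA.memEnv

lemma memEnv_Sig : ∀ n, IA.memEnv n ∈ IA.Sig
  | 0 => IA.PAIRel_Sig
  | 1 => IA.TRANS_Sig
  | 2 => IA.SYM_Sig
  | _ + 3 => IA.Kel_Sig

lemma MEML_Sig : IA.MEML ∈ IA.Sig := IA.interpL_Sig _ _ IA.memEnv_Sig

lemma MEML_le (a c d : PreW A) :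
    IA.MEML ≤ IA.imp (IA.eqW d c) (IA.imp (IA.memW c a) (IA.memW d a)) := by
  refine IA.lam_le (IA.lam_le (le_iInf fun x => IA.lam_le ?_))
  refine IA.app_le2
    (p := ⨅ s : a.dom, IA.imp (IA.times (a.val s) (IA.eqW (a.fam s) c)) x)
    (IA.aex_le _ x) ?_
  refine le_iInf fun s => IA.lam_le ?_
  refine IA.app_le2 (IA.times_le (a.val s) (IA.eqW (a.fam s) c) x) ?_
  refine IA.lam_le (IA.lam_le ?_)
  refine IA.app_le2 (iInf_le _ s) ?_
  refine IA.app_le2 (IA.app_le2 (IA.PAIRel_le (a.val s) (IA.eqW (a.fam s) d)) le_rfl) ?_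
  refine IA.app_le2 (IA.app_le2 (IA.TRANS_le c (a.fam s) d) le_rfl) ?_
  exact IA.app_le2 (IA.SYM_le d c) le_rfl

/-- `λ e m k. m (λ c'. c' (λ p q. (snd e) p (λ c''. c'' (λ p' q'. k (PAIR p' (TRANS q' q))))))`. -/
def memRT : LTerm :=
  .lam (.lam (.lam (.app (.var 1) (.lam (.app (.var 0) (.lam (.lam
    (.app (.app (.app (.var 5) (.lam (.lam (.var 0)))) (.var 1))
      (.lam (.app (.var 0) (.lam (.lam (.app (.var 6)
        (.app (.app (.var 9) (.var 1))
          (.app (.app (.var 10) (.var 0)) (.var 3))))))))))))))))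

/-- Realizer of right compatibility of membership. -/
noncomputable def MEMR : A := IA.interpL memRT IA.memEnv

lemma MEMR_Sig : IA.MEMR ∈ IA.Sig := IA.interpL_Sig _ _ IA.memEnv_Sig

lemma MEMR_le (a b c : PreW A) :
    IA.MEMR ≤ IA.imp (IA.eqW b a) (IA.imp (IA.memW c a) (IA.memW c b)) := by
  rw [IA.eqW_eq b a]
  refine IA.lam_le (IA.lam_le (le_iInf fun x => IA.lam_le ?_))
  refine IA.app_le2
    (p := ⨅ s : a.dom, IA.imp (IA.times (a.val s) (IA.eqW (a.fam s) c)) x)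
    (IA.aex_le _ x) ?_
  refine le_iInf fun s => IA.lam_le ?_
  refine IA.app_le2 (IA.times_le (a.val s) (IA.eqW (a.fam s) c) x) ?_
  refine IA.lam_le (IA.lam_le ?_)
  refine IA.app_le2
    (p := ⨅ t : b.dom, IA.imp (IA.times (b.val t) (IA.eqW (b.fam t) (a.fam s))) x) ?_ ?_
  · refine (IA.app_le2 (q := IA.memW (a.fam s) b) ?_ le_rfl).trans (IA.aex_le _ x)
    refine IA.app_le2
      (p := IA.imp (IA.subW b a) (IA.imp (IA.subW a b) (IA.subW a b))) ?_ ?_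
    · exact (IA.times_le _ _ (IA.subW a b)).trans (IA.imp_monotone (iInf_le _ s))
    · exact IA.lam_le (IA.lam_le le_rfl)
  · refine le_iInf fun t => IA.lam_le ?_
    refine IA.app_le2 (IA.times_le (b.val t) (IA.eqW (b.fam t) (a.fam s)) x) ?_
    refine IA.lam_le (IA.lam_le ?_)
    refine IA.app_le2 (iInf_le _ t) ?_
    refine IA.app_le2
      (IA.app_le2 (IA.PAIRel_le (b.val t) (IA.eqW (b.fam t) c)) le_rfl) ?_
    exact IA.app_le2 (IA.app_le2 (IA.TRANS_le (a.fam s) (b.fam t) c) le_rfl) le_rfl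

/-! ### Leibniz transport along `=_W` for interpreted formulas -/

/-- A 4-element environment (padded by its first element). -/
def env4 (a b c d : A) : ℕ → A
  | 0 => a
  | 1 => b
  | 2 => c
  | 3 => d
  | _ + 4 => a

lemma env4_Sig {a b c d : A} (ha : a ∈ IA.Sig) (hb : b ∈ IA.Sig) (hc : c ∈ IA.Sig)
    (hd : d ∈ IA.Sig) : ∀ n, env4 a b c d n ∈ IA.Sig
  | 0 => ha
  | 1 => hb
  | 2 => hc
  | 3 => hd
  | _ + 4 => ha

lemma sel_lemma {m : ℕ} (κ : Cardinal.{u}) (i j : Fin m) :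
    ∃ s ∈ IA.Sig, ∀ (v : Fin m → WSet A κ) (γ : WSet A κ),
      s ≤ IA.imp (IA.eqW γ.1 (v i).1)
        (IA.eqW ((Function.update v i γ) j).1 (v j).1) := by
  by_cases h : j = i
  · subst h
    refine ⟨IA.interpL (.lam (.var 0)) fun _ => IA.Kel,
      IA.interpL_Sig _ _ fun _ => IA.Kel_Sig, fun v γ => ?_⟩
    rw [Function.update_self]
    exact IA.lam_le le_rfl
  · refine ⟨IA.app IA.Kel IA.REFL, IA.app_Sig IA.Kel_Sig IA.REFL_Sig, fun v γ => ?_⟩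
    rw [Function.update_of_ne h]
    exact IA.app_le' (IA.Kel_le (IA.eqW (v j).1 (v j).1) (IA.eqW γ.1 (v i).1))
      (IA.REFL_le (v j).1)

lemma leibniz (κ : Cardinal.{u}) :
    ∀ {m : ℕ} (φ : SetFormula m) (i : Fin m),
      ∃ r ∈ IA.Sig, ∀ (v : Fin m → WSet A κ) (γ : WSet A κ),
        r ≤ IA.imp (IA.eqW γ.1 (v i).1)
          (IA.imp (IA.interp κ φ v) (IA.interp κ φ (Function.update v i γ))) := by
  intro m φ
  induction φ with
  | bot =>
    intro i
    refine ⟨IA.interpL (.lam (.lam (.var 0))) fun _ => IA.Kel,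
      IA.interpL_Sig _ _ fun _ => IA.Kel_Sig, fun v γ => ?_⟩
    simp only [interp]
    exact IA.lam_le (IA.lam_le le_rfl)
  | mem i' j' =>
    intro i
    obtain ⟨s1, hs1, hb1⟩ := IA.sel_lemma κ i i'
    obtain ⟨s2, hs2, hb2⟩ := IA.sel_lemma κ i j'
    refine ⟨IA.interpL
      (.lam (.lam (.app (.app (.var 5) (.app (.var 3) (.var 1)))
        (.app (.app (.var 4) (.app (.var 2) (.var 1))) (.var 0)))))
      (env4 s1 s2 IA.MEML IA.MEMR),
      IA.interpL_Sig _ _ (IA.env4_Sig hs1 hs2 IA.MEML_Sig IA.MEMR_Sig), fun v γ => ?_⟩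
    simp only [interp]
    refine IA.lam_le (IA.lam_le ?_)
    refine IA.app_le2 (p := IA.memW ((Function.update v i γ) i').1 (v j').1) ?_ ?_
    · refine IA.app_le2 (IA.MEMR_le (v j').1 ((Function.update v i γ) j').1
        ((Function.update v i γ) i').1) ?_
      exact IA.app_le2 (hb2 v γ) le_rfl
    · refine IA.app_le2 (IA.app_le2
        (IA.MEML_le (v j').1 (v i').1 ((Function.update v i γ) i').1) ?_) le_rfl
      exact IA.app_le2 (hb1 v γ) le_rfl
  | eq i' j' =>
    intro i
    obtain ⟨s1, hs1, hb1⟩ := IA.sel_lemma κ i i'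
    obtain ⟨s2, hs2, hb2⟩ := IA.sel_lemma κ i j'
    refine ⟨IA.interpL
      (.lam (.lam (.app (.app (.var 4) (.app (.var 2) (.var 1)))
        (.app (.app (.var 4) (.var 0)) (.app (.var 5) (.app (.var 3) (.var 1)))))))
      (env4 s1 s2 IA.TRANS IA.SYM),
      IA.interpL_Sig _ _ (IA.env4_Sig hs1 hs2 IA.TRANS_Sig IA.SYM_Sig), fun v γ => ?_⟩
    simp only [interp]
    refine IA.lam_le (IA.lam_le ?_)
    refine IA.app_le2 (p := IA.eqW (v i').1 ((Function.update v i γ) j').1) ?_ ?_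
    · refine IA.app_le2 (IA.TRANS_le (v i').1 ((Function.update v i γ) i').1
        ((Function.update v i γ) j').1) ?_
      exact IA.app_le2 (hb1 v γ) le_rfl
    · refine IA.app_le2 (IA.app_le2
        (IA.TRANS_le (v j').1 (v i').1 ((Function.update v i γ) j').1) le_rfl) ?_
      refine IA.app_le2 (IA.SYM_le ((Function.update v i γ) j').1 (v j').1) ?_
      exact IA.app_le2 (hb2 v γ) le_rfl
  | and φ ψ ihφ ihψ =>
    intro i
    obtain ⟨r1, hr1, hb1⟩ := ihφ i
    obtain ⟨r2, hr2, hb2⟩ := ihψ i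
    refine ⟨IA.interpL
      (.lam (.lam (.app (.app (.var 4)
          (.app (.app (.var 2) (.var 1)) (.app (.var 0) (.lam (.lam (.var 1))))))
        (.app (.app (.var 3) (.var 1)) (.app (.var 0) (.lam (.lam (.var 0))))))))
      (env4 r1 r2 IA.PAIRel IA.PAIRel),
      IA.interpL_Sig _ _ (IA.env4_Sig hr1 hr2 IA.PAIRel_Sig IA.PAIRel_Sig),
      fun v γ => ?_⟩
    simp only [interp]
    refine IA.lam_le (IA.lam_le ?_)
    refine IA.app_le2 (IA.app_le2 (IA.PAIRel_le _ _) ?_) ?_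
    · refine IA.app_le2 (IA.app_le2 (hb1 v γ) le_rfl) ?_
      exact IA.app_le2 (IA.times_le _ _ (IA.interp κ φ v))
        (IA.lam_le (IA.lam_le le_rfl))
    · refine IA.app_le2 (IA.app_le2 (hb2 v γ) le_rfl) ?_
      exact IA.app_le2 (IA.times_le _ _ (IA.interp κ ψ v))
        (IA.lam_le (IA.lam_le le_rfl))
  | or φ ψ ihφ ihψ =>
    intro i
    obtain ⟨r1, hr1, hb1⟩ := ihφ i
    obtain ⟨r2, hr2, hb2⟩ := ihψ i
    refine ⟨IA.interpL
      (.lam (.lam (.lam (.lam (.app (.app (.var 2)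
          (.lam (.app (.var 2) (.app (.app (.var 7) (.var 4)) (.var 0)))))
        (.lam (.app (.var 1) (.app (.app (.var 8) (.var 4)) (.var 0)))))))))
      (env4 r1 r2 r1 r2),
      IA.interpL_Sig _ _ (IA.env4_Sig hr1 hr2 hr1 hr2), fun v γ => ?_⟩
    simp only [interp]
    refine IA.lam_le (IA.lam_le (le_iInf fun x => IA.lam_le (IA.lam_le ?_)))
    refine IA.app_le2 (p := IA.imp (IA.interp κ ψ v) x) ?_ ?_
    · refine IA.app_le2 (p := IA.imp (IA.interp κ φ v) x) (iInf_le _ x) ?_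
      refine IA.lam_le ?_
      exact IA.app_le2 le_rfl (IA.app_le2 (IA.app_le2 (hb1 v γ) le_rfl) le_rfl)
    · refine IA.lam_le ?_
      exact IA.app_le2 le_rfl (IA.app_le2 (IA.app_le2 (hb2 v γ) le_rfl) le_rfl)
  | imp φ ψ ihφ ihψ =>
    intro i
    obtain ⟨r1, hr1, hb1⟩ := ihφ i
    obtain ⟨r2, hr2, hb2⟩ := ihψ i
    refine ⟨IA.interpL
      (.lam (.lam (.lam (.app (.app (.var 4) (.var 2))
        (.app (.var 1) (.app (.app (.var 3) (.app (.var 5) (.var 2))) (.var 0)))))))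
      (env4 r1 r2 IA.SYM IA.SYM),
      IA.interpL_Sig _ _ (IA.env4_Sig hr1 hr2 IA.SYM_Sig IA.SYM_Sig), fun v γ => ?_⟩
    simp only [interp]
    have h1 := hb1 (Function.update v i γ) (v i)
    rw [Function.update_self, Function.update_idem, Function.update_eq_self] at h1
    refine IA.lam_le (IA.lam_le (IA.lam_le ?_))
    refine IA.app_le2 (IA.app_le2 (hb2 v γ) le_rfl) ?_
    refine IA.app_le2 le_rfl ?_
    refine IA.app_le2 (IA.app_le2 h1 ?_) le_rfl
    exact IA.app_le2 (IA.SYM_le γ.1 (v i).1) le_rfl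
  | ex φ ih =>
    intro i
    obtain ⟨r1, hr1, hb1⟩ := ih i.castSucc
    refine ⟨IA.interpL
      (.lam (.lam (.lam (.app (.var 1)
        (.lam (.app (.var 1) (.app (.app (.var 4) (.var 3)) (.var 0))))))))
      (env4 r1 r1 r1 r1),
      IA.interpL_Sig _ _ (IA.env4_Sig hr1 hr1 hr1 hr1), fun v γ => ?_⟩
    simp only [interp]
    refine IA.lam_le (IA.lam_le (le_iInf fun x => IA.lam_le ?_))
    refine IA.app_le2 (IA.aex_le _ x) ?_
    refine le_iInf fun β => IA.lam_le ?_
    have h1 := hb1 (Fin.snoc v β) γ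
    rw [Fin.snoc_castSucc, ← Fin.snoc_update] at h1
    refine IA.app_le2 (iInf_le _ β) ?_
    exact IA.app_le2 (IA.app_le2 h1 le_rfl) le_rfl
  | all φ ih =>
    intro i
    obtain ⟨r1, hr1, hb1⟩ := ih i.castSucc
    refine ⟨IA.interpL
      (.lam (.lam (.app (.app (.var 2) (.var 1)) (.var 0))))
      (env4 r1 r1 r1 r1),
      IA.interpL_Sig _ _ (IA.env4_Sig hr1 hr1 hr1 hr1), fun v γ => ?_⟩
    simp only [interp]
    refine IA.lam_le (IA.lam_le (le_iInf fun β => ?_))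
    have h1 := hb1 (Fin.snoc v β) γ
    rw [Fin.snoc_castSucc, ← Fin.snoc_update] at h1
    exact IA.app_le2 (IA.app_le2 h1 le_rfl) (iInf_le _ β)

end ImplicativeAlgebra

theorem stmt8 {A : Type u} [CompleteLattice A] (IA : ImplicativeAlgebra A)
    (κ : Cardinal.{u}) (hκ : κ.IsInaccessible) (hA : Cardinal.mk A < κ) (n : ℕ) (φ : SetFormula (n + 2)) :
    IA.SigEquiv
      (fun v : Fin (n + 1) → WSet A κ =>
        IA.interp κ
          (SetFormula.ex
            ((SetFormula.mem (Fin.last (n + 1)) ((Fin.last n).castSucc)).and φ)) v)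
      (fun v : Fin (n + 1) → WSet A κ =>
        IA.aex fun u : (v (Fin.last n)).1.dom =>
          IA.times ((v (Fin.last n)).1.val u)
            (IA.interp κ φ (Fin.snoc v ((v (Fin.last n)).fam u)))) := by
  classical
  obtain ⟨L, hL, hLb⟩ := IA.leibniz κ φ (Fin.last (n + 1))
  constructor
  · -- `∃ z (z ∈ y ∧ φ)` entails the bounded reading
    refine IA.Sig_upward (IA.interpL_Sig
      (.lam (.lam (.app (.var 1) (.lam (.app (.var 0) (.lam (.lam (.app (.var 1)
        (.lam (.app (.var 0) (.lam (.lam (.app (.var 6)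
          (.app (.app (.var 8) (.var 1))
            (.app (.app (.var 9) (.var 0)) (.var 3))))))))))))))))
      (ImplicativeAlgebra.env4 IA.PAIRel L IA.PAIRel L)
      (IA.env4_Sig IA.PAIRel_Sig hL IA.PAIRel_Sig hL))
      (le_iInf fun v => ?_)
    simp only [ImplicativeAlgebra.interp, Fin.snoc_last, Fin.snoc_castSucc]
    refine IA.lam_le (le_iInf fun x => IA.lam_le ?_)
    refine IA.app_le2
      (p := ⨅ β : WSet A κ, IA.imp (IA.times (IA.memW β.1 (v (Fin.last n)).1)
        (IA.interp κ φ (Fin.snoc v β))) x) (IA.aex_le _ x) ?_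
    refine le_iInf fun β => IA.lam_le ?_
    refine IA.app_le2 (IA.times_le (IA.memW β.1 (v (Fin.last n)).1)
      (IA.interp κ φ (Fin.snoc v β)) x) ?_
    refine IA.lam_le (IA.lam_le ?_)
    refine IA.app_le2
      (p := ⨅ s : (v (Fin.last n)).1.dom,
        IA.imp (IA.times ((v (Fin.last n)).1.val s)
          (IA.eqW ((v (Fin.last n)).1.fam s) β.1)) x) (IA.aex_le _ x) ?_
    refine le_iInf fun s => IA.lam_le ?_
    refine IA.app_le2 (IA.times_le ((v (Fin.last n)).1.val s)
      (IA.eqW ((v (Fin.last n)).1.fam s) β.1) x) ?_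
    refine IA.lam_le (IA.lam_le ?_)
    have h1 := hLb (Fin.snoc v β) ((v (Fin.last n)).fam s)
    rw [Fin.snoc_last, Fin.update_snoc_last] at h1
    refine IA.app_le2 (iInf_le _ s) ?_
    refine IA.app_le2 (IA.app_le2 (IA.PAIRel_le ((v (Fin.last n)).1.val s)
      (IA.interp κ φ (Fin.snoc v ((v (Fin.last n)).fam s)))) le_rfl) ?_
    exact IA.app_le2 (IA.app_le2 h1 le_rfl) le_rfl
  · -- the bounded reading entails `∃ z (z ∈ y ∧ φ)`
    refine IA.Sig_upward (IA.interpL_Sig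
      (.lam (.lam (.app (.var 1) (.lam (.app (.var 0) (.lam (.lam (.app (.var 3)
        (.app (.app (.var 5)
            (.lam (.app (.var 0) (.app (.app (.var 6) (.var 2)) (.var 7)))))
          (.var 0))))))))))
      (ImplicativeAlgebra.env4 IA.PAIRel IA.REFL IA.PAIRel IA.REFL)
      (IA.env4_Sig IA.PAIRel_Sig IA.REFL_Sig IA.PAIRel_Sig IA.REFL_Sig))
      (le_iInf fun v => ?_)
    simp only [ImplicativeAlgebra.interp, Fin.snoc_last, Fin.snoc_castSucc]
    refine IA.lam_le (le_iInf fun x => IA.lam_le ?_)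
    refine IA.app_le2
      (p := ⨅ u : (v (Fin.last n)).1.dom,
        IA.imp (IA.times ((v (Fin.last n)).1.val u)
          (IA.interp κ φ (Fin.snoc v ((v (Fin.last n)).fam u)))) x)
      (IA.aex_le _ x) ?_
    refine le_iInf fun u => IA.lam_le ?_
    refine IA.app_le2 (IA.times_le ((v (Fin.last n)).1.val u)
      (IA.interp κ φ (Fin.snoc v ((v (Fin.last n)).fam u))) x) ?_
    refine IA.lam_le (IA.lam_le ?_)
    refine IA.app_le2 (iInf_le _ ((v (Fin.last n)).fam u)) ?_
    refine IA.app_le2 (IA.app_le2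
      (IA.PAIRel_le (IA.memW ((v (Fin.last n)).fam u).1 (v (Fin.last n)).1)
        (IA.interp κ φ (Fin.snoc v ((v (Fin.last n)).fam u)))) ?_) le_rfl
    refine le_iInf fun x' => IA.lam_le ?_
    refine IA.app_le2 (iInf_le _ u) ?_
    refine IA.app_le2 (IA.app_le2 (IA.PAIRel_le ((v (Fin.last n)).1.val u)
      (IA.eqW ((v (Fin.last n)).1.fam u) ((v (Fin.last n)).fam u).1)) le_rfl) ?_
    exact IA.REFL_le ((v (Fin.last n)).1.fam u)
end

section
/- Let 𝔸 = (A, ≤, →, Σ) be an implicative algebra with |A| < κ for a strongly inaccessible cardinal κ, and let W, ∈_W, =_W and the interpretation ‖·‖ be as defined below. Then W validates the Pairing axiom: ‖∀x ∀y ∃z (x ∈ z ∧ y ∈ z)‖ ∈ Σ. -/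
universe u

namespace ImplicativeAlgebra

variable {A : Type u} [CompleteLattice A] (IA : ImplicativeAlgebra A)

/-- Application in an implicative algebra. -/
def ap (a b : A) : A := sInf {c | a ≤ IA.imp b c}

theorem le_imp_ap (a b : A) : a ≤ IA.imp b (IA.ap a b) := by
  rw [ap, imp_sInf]
  exact le_iInf fun c => le_iInf fun hc => hc

theorem ap_le {a b c : A} (h : a ≤ IA.imp b c) : IA.ap a b ≤ c := sInf_le h

theorem le_imp_of_ap {a b c : A} (h : IA.ap a b ≤ c) : a ≤ IA.imp b c :=
  (IA.le_imp_ap a b).trans (IA.imp_monotone h)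

theorem ap_mono {a a' b b' : A} (ha : a ≤ a') (hb : b ≤ b') :
    IA.ap a b ≤ IA.ap a' b' :=
  IA.ap_le ((ha.trans (IA.le_imp_ap a' b')).trans (IA.imp_antitone hb))

theorem ap_mem {a b : A} (ha : a ∈ IA.Sig) (hb : b ∈ IA.Sig) : IA.ap a b ∈ IA.Sig :=
  IA.Sig_mp (IA.Sig_upward ha (IA.le_imp_ap a b)) hb

/-- The value of the `K` combinator. -/
def Kv : A := ⨅ a : A, ⨅ b : A, IA.imp a (IA.imp b a)

/-- The value of the `S` combinator. -/
def Sv : A := ⨅ a : A, ⨅ b : A, ⨅ c : A,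
  IA.imp (IA.imp a (IA.imp b c)) (IA.imp (IA.imp a b) (IA.imp a c))

theorem Kv_mem : IA.Kv ∈ IA.Sig := IA.Sig_K
theorem Sv_mem : IA.Sv ∈ IA.Sig := IA.Sig_S

theorem Kv_le (a b : A) : IA.Kv ≤ IA.imp a (IA.imp b a) :=
  (iInf_le _ a).trans (iInf_le _ b)

theorem Sv_le (a b c : A) : IA.Sv ≤
    IA.imp (IA.imp a (IA.imp b c)) (IA.imp (IA.imp a b) (IA.imp a c)) :=
  ((iInf_le _ a).trans (iInf_le _ b)).trans (iInf_le _ c)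

theorem K_red (a b : A) : IA.ap (IA.ap IA.Kv a) b ≤ a :=
  IA.ap_le (IA.ap_le (IA.Kv_le a b))

theorem S_red (a b c : A) :
    IA.ap (IA.ap (IA.ap IA.Sv a) b) c ≤ IA.ap (IA.ap a c) (IA.ap b c) := by
  have h1 : a ≤ IA.imp c (IA.imp (IA.ap b c) (IA.ap (IA.ap a c) (IA.ap b c))) :=
    (IA.le_imp_ap a c).trans (IA.imp_monotone (IA.le_imp_ap _ _))
  have h2 : b ≤ IA.imp c (IA.ap b c) := IA.le_imp_ap b c
  have := IA.Sv_le c (IA.ap b c) (IA.ap (IA.ap a c) (IA.ap b c))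
  exact IA.ap_le (IA.ap_le (IA.ap_le (this.trans (IA.imp_antitone h1))
    |>.trans (IA.imp_antitone h2)))

end ImplicativeAlgebra

/-- Combinatory terms with variables. -/
inductive Tm where
  | K : Tm
  | S : Tm
  | var (n : ℕ) : Tm
  | app (t u : Tm) : Tm

namespace Tm

/-- Bracket abstraction of a variable. -/
def abs (n : ℕ) : Tm → Tm
  | var m => if n = m then app (app S K) K else app K (var m)
  | app t u => app (app S (abs n t)) (abs n u)
  | K => app K K
  | S => app K S

/-- Terms with no free variables. -/
def closed : Tm → Bool
  | var _ => false
  | app t u => closed t && closed u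
  | K => true
  | S => true

end Tm

namespace ImplicativeAlgebra

variable {A : Type u} [CompleteLattice A] (IA : ImplicativeAlgebra A)

/-- Evaluation of combinatory terms. -/
def ev (ρ : ℕ → A) : Tm → A
  | .K => IA.Kv
  | .S => IA.Sv
  | .var n => ρ n
  | .app t u => IA.ap (ev ρ t) (ev ρ u)

theorem ev_mem (ρ : ℕ → A) : ∀ (t : Tm), t.closed = true → IA.ev ρ t ∈ IA.Sig
  | .K, _ => IA.Sig_K
  | .S, _ => IA.Sig_S
  | .app t u, h => by
    rw [Tm.closed, Bool.and_eq_true] at h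
    exact IA.ap_mem (ev_mem ρ t h.1) (ev_mem ρ u h.2)

theorem I_red (ρ : ℕ → A) (a : A) :
    IA.ap (IA.ev ρ (.app (.app .S .K) .K)) a ≤ a := by
  simp only [ev]
  exact (IA.S_red IA.Kv IA.Kv a).trans (IA.K_red a (IA.ap IA.Kv a))

theorem abs_beta (ρ : ℕ → A) (n : ℕ) (a : A) :
    ∀ t : Tm, IA.ap (IA.ev ρ (t.abs n)) a ≤ IA.ev (Function.update ρ n a) t
  | .var m => by
    by_cases h : n = m
    · subst h
      simp only [Tm.abs, if_pos rfl]
      have := IA.I_red ρ a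
      simpa [ev, Function.update_self] using this
    · simp only [Tm.abs, if_neg h, ev]
      have := IA.K_red (ρ m) a
      simpa [ev, Function.update_of_ne (Ne.symm h)] using this
  | .K => by simpa [Tm.abs, ev] using IA.K_red IA.Kv a
  | .S => by simpa [Tm.abs, ev] using IA.K_red IA.Sv a
  | .app t u => by
    simp only [Tm.abs, ev]
    exact (IA.S_red (IA.ev ρ (t.abs n)) (IA.ev ρ (u.abs n)) a).trans
      (IA.ap_mono (abs_beta ρ n a t) (abs_beta ρ n a u))

end ImplicativeAlgebra


namespace Tm

/-- `λ a b f. f a b` (pairing). -/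
def PairT : Tm :=
  abs 0 (abs 1 (abs 2 (app (app (var 2) (var 0)) (var 1))))

/-- `λ x u h. h (PairT u x)`. -/
def stepT : Tm :=
  abs 0 (abs 1 (abs 2 (app (var 2) (app (app PairT (var 1)) (var 0)))))

/-- `λ x. PairT (stepT x) (stepT x)`. -/
def FT : Tm :=
  abs 0 (app (app PairT (app stepT (var 0))) (app stepT (var 0)))

/-- `λ x f. f (x x f)`. -/
def DT : Tm :=
  abs 0 (abs 1 (app (var 1) (app (app (var 0) (var 0)) (var 1))))

/-- The reflexivity realizer `DT DT FT`. -/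
def RT : Tm := app (app DT DT) FT

/-- `λ h. h (PairT K RT)`. -/
def pT : Tm := abs 0 (app (var 0) (app (app PairT K) RT))

/-- `λ f. f (PairT pT pT)`. -/
def TT : Tm := abs 0 (app (var 0) (app (app PairT pT) pT))

theorem TT_closed : TT.closed = true := by decide

end Tm

namespace ImplicativeAlgebra

variable {A : Type u} [CompleteLattice A] (IA : ImplicativeAlgebra A)

theorem ap_le_of_le {t b b' c : A} (h1 : t ≤ IA.imp b' c) (h2 : b ≤ b') :
    IA.ap t b ≤ c :=
  IA.ap_le (h1.trans (IA.imp_antitone h2))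

theorem pair_le (ρ : ℕ → A) {a b x y : A} (ha : a ≤ x) (hb : b ≤ y) :
    IA.ap (IA.ap (IA.ev ρ Tm.PairT) a) b ≤ IA.times x y := by
  refine le_iInf fun c => IA.le_imp_of_ap ?_
  have h1 : IA.ap (IA.ev ρ Tm.PairT) a ≤
      IA.ev (Function.update ρ 0 a) (Tm.abs 1 (Tm.abs 2
        (Tm.app (Tm.app (Tm.var 2) (Tm.var 0)) (Tm.var 1)))) :=
    IA.abs_beta ρ 0 a _
  set ρ1 := Function.update ρ 0 a
  have h2 : IA.ap (IA.ap (IA.ap (IA.ev ρ Tm.PairT) a) b) (IA.imp x (IA.imp y c)) ≤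
      IA.ap (IA.ap (IA.ev ρ1 (Tm.abs 1 (Tm.abs 2
        (Tm.app (Tm.app (Tm.var 2) (Tm.var 0)) (Tm.var 1))))) b) (IA.imp x (IA.imp y c)) :=
    IA.ap_mono (IA.ap_mono h1 le_rfl) le_rfl
  refine h2.trans ?_
  have h3 := IA.ap_mono (IA.abs_beta ρ1 1 b (Tm.abs 2
      (Tm.app (Tm.app (Tm.var 2) (Tm.var 0)) (Tm.var 1)))) (le_refl (IA.imp x (IA.imp y c)))
  refine h3.trans ?_
  have h4 := IA.abs_beta (Function.update ρ1 1 b) 2 (IA.imp x (IA.imp y c))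
      (Tm.app (Tm.app (Tm.var 2) (Tm.var 0)) (Tm.var 1))
  refine h4.trans ?_
  simp only [ev, Function.update_self, ρ1,
    Function.update_of_ne (by decide : (0 : ℕ) ≠ 2),
    Function.update_of_ne (by decide : (1 : ℕ) ≠ 2),
    Function.update_of_ne (by decide : (0 : ℕ) ≠ 1),
    Function.update_self]
  exact IA.ap_le_of_le (IA.ap_le_of_le le_rfl ha) hb

theorem RT_fix (ρ : ℕ → A) :
    IA.ev ρ Tm.RT ≤ IA.ap (IA.ev ρ Tm.FT) (IA.ev ρ Tm.RT) := by
  have hD : IA.ev ρ Tm.RT = IA.ap (IA.ap (IA.ev ρ Tm.DT) (IA.ev ρ Tm.DT)) (IA.ev ρ Tm.FT) := by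
    simp [ev, Tm.RT]
  rw [hD]
  set d := IA.ev ρ Tm.DT with hd
  set F := IA.ev ρ Tm.FT with hF
  have h1 : IA.ap d d ≤ IA.ev (Function.update ρ 0 d)
      (Tm.abs 1 (Tm.app (Tm.var 1) (Tm.app (Tm.app (Tm.var 0) (Tm.var 0)) (Tm.var 1)))) :=
    IA.abs_beta ρ 0 d _
  refine (IA.ap_mono h1 (le_refl F)).trans ?_
  refine (IA.abs_beta (Function.update ρ 0 d) 1 F
      (Tm.app (Tm.var 1) (Tm.app (Tm.app (Tm.var 0) (Tm.var 0)) (Tm.var 1)))).trans ?_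
  simp only [ev, Function.update_self,
    Function.update_of_ne (by decide : (0 : ℕ) ≠ 1), Function.update_self]
  exact le_rfl

theorem refl_le (ρ : ℕ → A) : ∀ α : PreW A, IA.ev ρ Tm.RT ≤ IA.eqW α α := by
  intro α
  induction α with
  | mk ι f v ih =>
    refine (IA.RT_fix ρ).trans ?_
    rw [ImplicativeAlgebra.eqW]
    set R := IA.ev ρ Tm.RT with hR
    -- reduce `F R`
    have h1 : IA.ap (IA.ev ρ Tm.FT) R ≤
        IA.ev (Function.update ρ 0 R)
          (Tm.app (Tm.app Tm.PairT (Tm.app Tm.stepT (Tm.var 0)))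
            (Tm.app Tm.stepT (Tm.var 0))) :=
      IA.abs_beta ρ 0 R _
    refine h1.trans ?_
    set ρ1 := Function.update ρ 0 R with hρ1
    simp only [ev, Function.update_self]
    -- the two components are `step R`
    refine IA.pair_le ρ1 ?_ ?_ <;>
    · refine le_iInf fun t => IA.le_imp_of_ap ?_
      -- `step R (v t) ≤ aex ...`
      have h2 : IA.ap (IA.ev ρ1 Tm.stepT) (IA.ev ρ1 (Tm.var 0)) ≤
          IA.ev (Function.update ρ1 0 (IA.ev ρ1 (Tm.var 0)))
            (Tm.abs 1 (Tm.abs 2 (Tm.app (Tm.var 2)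
              (Tm.app (Tm.app Tm.PairT (Tm.var 1)) (Tm.var 0))))) :=
        IA.abs_beta ρ1 0 _ _
      have hev0 : IA.ev ρ1 (Tm.var 0) = R := by simp [ev, hρ1]
      rw [hev0] at h2
      set ρ2 := Function.update ρ1 0 R with hρ2
      have h3 : IA.ap (IA.ap (IA.ev ρ1 Tm.stepT) R) (v t) ≤
          IA.ev (Function.update ρ2 1 (v t))
            (Tm.abs 2 (Tm.app (Tm.var 2)
              (Tm.app (Tm.app Tm.PairT (Tm.var 1)) (Tm.var 0)))) :=
        (IA.ap_mono h2 le_rfl).trans (IA.abs_beta ρ2 1 (v t) _)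
      set ρ3 := Function.update ρ2 1 (v t) with hρ3
      refine h3.trans ?_
      refine le_iInf fun x => IA.le_imp_of_ap ?_
      set h := ⨅ s : ι, IA.imp (IA.times (v s) (IA.eqW (f s) (f t))) x with hh
      refine (IA.abs_beta ρ3 2 h _).trans ?_
      set ρ4 := Function.update ρ3 2 h with hρ4
      simp only [ev]
      have e2 : ρ4 2 = h := by simp [hρ4]
      have e1 : ρ4 1 = v t := by
        simp [hρ4, hρ3, Function.update_of_ne (by decide : (1 : ℕ) ≠ 2)]
      have e0 : ρ4 0 = R := by
        simp [hρ4, hρ3, hρ2,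
          Function.update_of_ne (by decide : (0 : ℕ) ≠ 2),
          Function.update_of_ne (by decide : (0 : ℕ) ≠ 1)]
      rw [e0, e1, e2]
      refine IA.ap_le_of_le (iInf_le _ t) ?_
      exact IA.pair_le ρ4 le_rfl (ih t)

theorem pT_le_mem (ρ : ℕ → A) (β α : PreW A) (s : β.dom)
    (hfam : β.fam s = α) (hval : IA.Kv ≤ β.val s) :
    IA.ev ρ Tm.pT ≤ IA.memW α β := by
  refine le_iInf fun x => IA.le_imp_of_ap ?_
  set h := ⨅ s' : β.dom, IA.imp (IA.times (β.val s') (IA.eqW (β.fam s') α)) x with hh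
  refine (IA.abs_beta ρ 0 h _).trans ?_
  set ρ1 := Function.update ρ 0 h with hρ1
  simp only [ev, Function.update_self]
  refine IA.ap_le_of_le (iInf_le _ s) ?_
  refine IA.pair_le ρ1 hval ?_
  rw [hfam]
  exact IA.refl_le ρ1 α

end ImplicativeAlgebra

theorem stmt13 {A : Type u} [CompleteLattice A] (IA : ImplicativeAlgebra A)
    (κ : Cardinal.{u}) (hκ : κ.IsInaccessible) (hA : Cardinal.mk A < κ) :
    IA.interp κ
      (SetFormula.all (SetFormula.all (SetFormula.ex
        ((SetFormula.mem 0 2).and (SetFormula.mem 1 2)))))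
      (fun i => i.elim0) ∈ IA.Sig := by
  -- unfold the interpretation of the pairing formula
  have hgoal : IA.interp κ
      (SetFormula.all (SetFormula.all (SetFormula.ex
        ((SetFormula.mem 0 2).and (SetFormula.mem 1 2)))))
      (fun i => i.elim0) =
    ⨅ α : WSet A κ, ⨅ β : WSet A κ,
      IA.aex fun γ : WSet A κ => IA.times (IA.memW α.1 γ.1) (IA.memW β.1 γ.1) := by
    simp [ImplicativeAlgebra.interp, Fin.snoc]
  set ρ : ℕ → A := fun _ => IA.Kv with hρ
  have hT : IA.ev ρ Tm.TT ∈ IA.Sig := IA.ev_mem ρ Tm.TT Tm.TT_closed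
  refine IA.Sig_upward hT ?_
  rw [hgoal]
  refine le_iInf fun α => le_iInf fun β => le_iInf fun x => IA.le_imp_of_ap ?_
  set h := ⨅ γ : WSet A κ,
    IA.imp (IA.times (IA.memW α.1 γ.1) (IA.memW β.1 γ.1)) x with hh
  refine (IA.abs_beta ρ 0 h _).trans ?_
  set ρ1 := Function.update ρ 0 h with hρ1
  simp only [ImplicativeAlgebra.ev, Function.update_self]
  -- the pair {α, β}
  set γ0 : PreW A := ⟨ULift Bool, fun s => if s.down then α.1 else β.1, fun _ => ⊤⟩
    with hγ0
  have hsmall : γ0.HSmall κ := by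
    refine ⟨lt_trans (Cardinal.lt_aleph0_of_finite _) hκ.1, fun i => ?_⟩
    dsimp only
    cases i.down
    · exact β.2
    · exact α.2
  refine IA.ap_le_of_le (iInf_le _ ⟨γ0, hsmall⟩) ?_
  refine IA.pair_le ρ1 ?_ ?_
  · exact IA.pT_le_mem ρ1 γ0 α.1 ⟨true⟩ rfl le_top
  · exact IA.pT_le_mem ρ1 γ0 β.1 ⟨false⟩ rfl le_top
end
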